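/- Let G be a semistable finite directed multigraph (every vertex v satisfies deg⁻(v) ≥ 1, deg⁺(v) ≥ 1, deg⁻(v)+deg⁺(v) ≥ 3, where loops contribute to both in- and out-degree) and let e = uv be a contractible edge of G (u ≠ v and deg⁺(u)=1 or deg⁻(v)=1). Let G' be the graph obtained by contracting e. If e' is an edge of G with e' ≠ e and e' is not an edge from v to u, then e' is contractible in G if and only if its image is contractible in G'. -/

import Mathlib

open Relation

structure MDigraph where
  V : Type
  E : Type
  [hV : Finite V]
  [hE : Finite E]
  src : E → V
  tgt : E → V

attribute [instance] MDigraph.hV MDigraph.hE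

namespace MDigraph

noncomputable def degOut (G : MDigraph) (v : G.V) : ℕ := Nat.card {e : G.E // G.src e = v}
noncomputable def degIn (G : MDigraph) (v : G.V) : ℕ := Nat.card {e : G.E // G.tgt e = v}

def Semistable (G : MDigraph) : Prop :=
  ∀ v : G.V, 1 ≤ G.degIn v ∧ 1 ≤ G.degOut v ∧ 3 ≤ G.degIn v + G.degOut v

def Stable (G : MDigraph) : Prop :=
  ∀ v : G.V, 2 ≤ G.degIn v ∧ 2 ≤ G.degOut v

def Contractible (G : MDigraph) (e : G.E) : Prop :=
  G.src e ≠ G.tgt e ∧ (G.degOut (G.src e) = 1 ∨ G.degIn (G.tgt e) = 1)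

def mergeRel (G : MDigraph) (e0 : G.E) (a b : G.V) : Prop :=
  a = b ∨ ((a = G.src e0 ∨ a = G.tgt e0) ∧ (b = G.src e0 ∨ b = G.tgt e0))

def contract (G : MDigraph) (e0 : G.E) : MDigraph where
  V := Quot (G.mergeRel e0)
  E := {e : G.E // e ≠ e0}
  src e := Quot.mk _ (G.src e.1)
  tgt e := Quot.mk _ (G.tgt e.1)

structure Iso (G H : MDigraph) where
  vEquiv : G.V ≃ H.V
  eEquiv : G.E ≃ H.E
  src_map : ∀ e, H.src (eEquiv e) = vEquiv (G.src e)
  tgt_map : ∀ e, H.tgt (eEquiv e) = vEquiv (G.tgt e)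

def Adj (G : MDigraph) (a b : G.V) : Prop := ∃ e, G.src e = a ∧ G.tgt e = b

def Strong (G : MDigraph) : Prop := ∀ a b : G.V, ReflTransGen G.Adj a b

def ContractStep (G H : MDigraph) : Prop :=
  ∃ e0 : G.E, G.Contractible e0 ∧ Nonempty (Iso (G.contract e0) H)

def IsStabilization (G H : MDigraph) : Prop :=
  ReflTransGen ContractStep G H ∧ H.Stable

def Stabilizable (G : MDigraph) : Prop := ∃ H, G.IsStabilization H

def IsLinear (G : MDigraph) (L : Set G.E) : Prop :=
  ∀ v : G.V, Nat.card {e : G.E // e ∈ L ∧ G.src e = v} = Nat.card {e : G.E // e ∈ L ∧ G.tgt e = v}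
    ∧ Nat.card {e : G.E // e ∈ L ∧ G.src e = v} ≤ 1

def LAdj (G : MDigraph) (L : Set G.E) (a b : G.V) : Prop := ∃ e ∈ L, G.src e = a ∧ G.tgt e = b

def supp (G : MDigraph) (L : Set G.E) : Set G.V := {v | ∃ e ∈ L, G.src e = v ∨ G.tgt e = v}

noncomputable def components (G : MDigraph) (L : Set G.E) : ℕ :=
  Nat.card (Quot (fun a b : G.supp L => G.LAdj L a.1 b.1))

noncomputable def adjMatrix (G : MDigraph) : Matrix G.V G.V ℤ :=
  Matrix.of fun a b => (Nat.card {e : G.E // G.src e = a ∧ G.tgt e = b} : ℤ)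

open Classical in
noncomputable def detIA (G : MDigraph) : ℤ :=
  letI := Fintype.ofFinite G.V
  ((1 : Matrix G.V G.V ℤ) - G.adjMatrix).det

noncomputable def weight (G : MDigraph) : ℤ := (Nat.card G.E : ℤ) - (Nat.card G.V : ℤ)

noncomputable def numLinear (G : MDigraph) : ℕ := Nat.card {L : Set G.E // G.IsLinear L}

end MDigraph

noncomputable example (G : MDigraph) (C : ℤ) : ℤ := ∑ᶠ L : {L : Set G.E // G.IsLinear L}, C ^ G.components L.1

namespace MDigraph

variable (G : MDigraph) (e0 : G.E)

lemma mergeRel_equivalence : Equivalence (G.mergeRel e0) where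
  refl a := Or.inl rfl
  symm h := by rcases h with h | ⟨h1, h2⟩; exact Or.inl h.symm; exact Or.inr ⟨h2, h1⟩
  trans h h' := by
    rcases h with rfl | ⟨h1, h2⟩
    · exact h'
    · rcases h' with rfl | ⟨h3, h4⟩
      · exact Or.inr ⟨h1, h2⟩
      · exact Or.inr ⟨h1, h4⟩

lemma quot_mk_eq_iff (a b : G.V) :
    Quot.mk (G.mergeRel e0) a = Quot.mk (G.mergeRel e0) b ↔ G.mergeRel e0 a b := by
  rw [Quot.eq, (G.mergeRel_equivalence e0).eqvGen_iff]

lemma two_le_degOut {u : G.V} {e1 e2 : G.E} (h1 : G.src e1 = u) (h2 : G.src e2 = u)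
    (h : e1 ≠ e2) : 2 ≤ G.degOut u :=
  Finite.one_lt_card_iff_nontrivial.mpr ⟨⟨e1, h1⟩, ⟨e2, h2⟩, by simpa using h⟩

lemma two_le_degIn {u : G.V} {e1 e2 : G.E} (h1 : G.tgt e1 = u) (h2 : G.tgt e2 = u)
    (h : e1 ≠ e2) : 2 ≤ G.degIn u :=
  Finite.one_lt_card_iff_nontrivial.mpr ⟨⟨e1, h1⟩, ⟨e2, h2⟩, by simpa using h⟩

lemma contract_degOut_eq (w : (G.contract e0).V) :
    (G.contract e0).degOut w
      = Nat.card {e : G.E // e ≠ e0 ∧ Quot.mk (G.mergeRel e0) (G.src e) = w} := by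
  show Nat.card {e : {e : G.E // e ≠ e0} // Quot.mk (G.mergeRel e0) (G.src e.1) = w} = _
  exact Nat.card_congr ⟨fun x => ⟨x.1.1, x.1.2, x.2⟩, fun e => ⟨⟨e.1, e.2.1⟩, e.2.2⟩,
    fun x => rfl, fun e => rfl⟩

lemma contract_degIn_eq (w : (G.contract e0).V) :
    (G.contract e0).degIn w
      = Nat.card {e : G.E // e ≠ e0 ∧ Quot.mk (G.mergeRel e0) (G.tgt e) = w} := by
  show Nat.card {e : {e : G.E // e ≠ e0} // Quot.mk (G.mergeRel e0) (G.tgt e.1) = w} = _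
  exact Nat.card_congr ⟨fun x => ⟨x.1.1, x.1.2, x.2⟩, fun e => ⟨⟨e.1, e.2.1⟩, e.2.2⟩,
    fun x => rfl, fun e => rfl⟩

lemma mergeRel_iff_of_ne (a b : G.V) (hu : b ≠ G.src e0) (hv : b ≠ G.tgt e0) :
    G.mergeRel e0 a b ↔ a = b := by
  constructor
  · rintro (h | ⟨h1, h2 | h2⟩)
    · exact h
    · exact absurd h2 hu
    · exact absurd h2 hv
  · exact Or.inl

lemma contract_degOut_of_ne (a : G.V) (hu : a ≠ G.src e0) (hv : a ≠ G.tgt e0) :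
    (G.contract e0).degOut (Quot.mk _ a) = G.degOut a := by
  refine (contract_degOut_eq G e0 _).trans ?_
  apply Nat.card_congr
  refine Equiv.subtypeEquivRight fun e => ?_
  rw [quot_mk_eq_iff, mergeRel_iff_of_ne G e0 _ _ hu hv]
  constructor
  · exact fun h => h.2
  · exact fun h => ⟨fun he => hu (by rw [← h, he]), h⟩

lemma contract_degIn_of_ne (a : G.V) (hu : a ≠ G.src e0) (hv : a ≠ G.tgt e0) :
    (G.contract e0).degIn (Quot.mk _ a) = G.degIn a := by
  refine (contract_degIn_eq G e0 _).trans ?_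
  apply Nat.card_congr
  refine Equiv.subtypeEquivRight fun e => ?_
  rw [quot_mk_eq_iff, mergeRel_iff_of_ne G e0 _ _ hu hv]
  constructor
  · exact fun h => h.2
  · exact fun h => ⟨fun he => hv (by rw [← h, he]), h⟩

lemma mergeRel_src_iff (s : G.V) :
    G.mergeRel e0 s (G.src e0) ↔ (s = G.src e0 ∨ s = G.tgt e0) := by
  constructor
  · rintro (h | ⟨h1, _⟩)
    · exact Or.inl h
    · exact h1
  · exact fun h => Or.inr ⟨h, Or.inl rfl⟩

lemma mergeRel_tgt_iff (s : G.V) :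
    G.mergeRel e0 s (G.tgt e0) ↔ (s = G.src e0 ∨ s = G.tgt e0) := by
  constructor
  · rintro (h | ⟨h1, _⟩)
    · exact Or.inr h
    · exact h1
  · exact fun h => Or.inr ⟨h, Or.inr rfl⟩

open Classical in
lemma card_erase_aux (P : G.E → Prop) (h0 : P e0) :
    Nat.card {e : G.E // P e ∧ e ≠ e0} + 1 = Nat.card {e : G.E // P e} := by
  have e1 : {e : G.E // P e ∧ e ≠ e0} ≃ {x : {e : G.E // P e} // x.1 ≠ e0} :=
    ⟨fun e => ⟨⟨e.1, e.2.1⟩, e.2.2⟩, fun x => ⟨x.1.1, x.1.2, x.2⟩, fun _ => rfl, fun _ => rfl⟩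
  have e2 : {x : {e : G.E // P e} // x.1 ≠ e0} ⊕ {x : {e : G.E // P e} // ¬ x.1 ≠ e0}
      ≃ {e : G.E // P e} := Equiv.sumCompl _
  have h1 : Nat.card {x : {e : G.E // P e} // ¬ x.1 ≠ e0} = 1 := by
    have : Nonempty {x : {e : G.E // P e} // ¬ x.1 ≠ e0} := ⟨⟨⟨e0, h0⟩, by simp⟩⟩
    have : Subsingleton {x : {e : G.E // P e} // ¬ x.1 ≠ e0} := by
      constructor
      rintro ⟨⟨a, _⟩, ha⟩ ⟨⟨b, _⟩, hb⟩
      simp only [not_not] at ha hb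
      subst ha; subst hb; rfl
    exact Nat.card_unique
  calc Nat.card {e : G.E // P e ∧ e ≠ e0} + 1
      = Nat.card {x : {e : G.E // P e} // x.1 ≠ e0}
        + Nat.card {x : {e : G.E // P e} // ¬ x.1 ≠ e0} := by rw [Nat.card_congr e1, h1]
    _ = Nat.card {e : G.E // P e} := by rw [← Nat.card_sum, Nat.card_congr e2]

open Classical in
lemma card_or_aux (p q : G.V → Prop) (hpq : ∀ x, p x → q x → False) (f : G.E → G.V) :
    Nat.card {e : G.E // p (f e) ∨ q (f e)}
      = Nat.card {e : G.E // p (f e)} + Nat.card {e : G.E // q (f e)} := by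
  rw [← Nat.card_sum]
  apply Nat.card_congr
  exact subtypeOrEquiv _ _ (by
    intro r hr1 hr2 e he
    exact (hpq (f e) (hr1 e he) (hr2 e he)).elim)

lemma contract_degOut_merge (huv : G.src e0 ≠ G.tgt e0) :
    (G.contract e0).degOut (Quot.mk _ (G.src e0)) + 1
      = G.degOut (G.src e0) + G.degOut (G.tgt e0) := by
  refine (congrArg (· + 1) (contract_degOut_eq G e0 _)).trans ?_
  show Nat.card _ + 1 = _
  have h1 : Nat.card {e : G.E // e ≠ e0 ∧ Quot.mk (G.mergeRel e0) (G.src e)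
        = Quot.mk (G.mergeRel e0) (G.src e0)}
      = Nat.card {e : G.E // (G.src e = G.src e0 ∨ G.src e = G.tgt e0) ∧ e ≠ e0} := by
    apply Nat.card_congr
    refine Equiv.subtypeEquivRight fun e => ?_
    rw [quot_mk_eq_iff, mergeRel_src_iff, and_comm]
  rw [h1, card_erase_aux G e0 _ (Or.inl rfl),
    card_or_aux G (fun x => x = G.src e0) (fun x => x = G.tgt e0)
      (fun x h1 h2 => huv (h1 ▸ h2 ▸ rfl)) G.src]
  rfl

lemma contract_degIn_merge (huv : G.src e0 ≠ G.tgt e0) :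
    (G.contract e0).degIn (Quot.mk _ (G.tgt e0)) + 1
      = G.degIn (G.src e0) + G.degIn (G.tgt e0) := by
  refine (congrArg (· + 1) (contract_degIn_eq G e0 _)).trans ?_
  show Nat.card _ + 1 = _
  have h1 : Nat.card {e : G.E // e ≠ e0 ∧ Quot.mk (G.mergeRel e0) (G.tgt e)
        = Quot.mk (G.mergeRel e0) (G.tgt e0)}
      = Nat.card {e : G.E // (G.tgt e = G.src e0 ∨ G.tgt e = G.tgt e0) ∧ e ≠ e0} := by
    apply Nat.card_congr
    refine Equiv.subtypeEquivRight fun e => ?_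
    rw [quot_mk_eq_iff, mergeRel_tgt_iff, and_comm]
  rw [h1, card_erase_aux G e0 _ (Or.inr rfl),
    card_or_aux G (fun x => x = G.src e0) (fun x => x = G.tgt e0)
      (fun x h1 h2 => huv (h1 ▸ h2 ▸ rfl)) G.tgt]
  rfl

end MDigraph

open MDigraph in
/-- For a semistable graph `G` and a contractible edge `e0`, an edge
`e' ≠ e0` that is not an edge from `tgt e0` to `src e0` is contractible in `G`
iff its image is contractible in the contracted graph. -/
theorem contractible_iff_contractible_contract (G : MDigraph) (hG : G.Semistable)
    (e0 : G.E) (hc : G.Contractible e0) (e' : G.E) (hne : e' ≠ e0)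
    (hrev : ¬ (G.src e' = G.tgt e0 ∧ G.tgt e' = G.src e0)) :
    G.Contractible e' ↔ (G.contract e0).Contractible ⟨e', hne⟩ := by
  obtain ⟨huv, hdeg⟩ := hc
  -- e' is not a parallel copy of e0
  have hnotuv : ¬ (G.src e' = G.src e0 ∧ G.tgt e' = G.tgt e0) := by
    rintro ⟨h1, h2⟩
    have o1 := G.two_le_degOut h1 rfl hne
    have o2 := G.two_le_degIn h2 rfl hne
    omega
  -- equality of classes iff equality of vertices
  have hiff1 : Quot.mk (G.mergeRel e0) (G.src e') = Quot.mk (G.mergeRel e0) (G.tgt e')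
      ↔ G.src e' = G.tgt e' := by
    rw [G.quot_mk_eq_iff e0]
    constructor
    · rintro (h | ⟨h1 | h1, h2 | h2⟩)
      · exact h
      · exact h1.trans h2.symm
      · exact absurd ⟨h1, h2⟩ hnotuv
      · exact absurd ⟨h1, h2⟩ hrev
      · exact h1.trans h2.symm
    · exact Or.inl
  have hquv : Quot.mk (G.mergeRel e0) (G.src e0) = Quot.mk (G.mergeRel e0) (G.tgt e0) :=
    Quot.sound (Or.inr ⟨Or.inl rfl, Or.inr rfl⟩)
  have hOmerge := G.contract_degOut_merge e0 huv
  have hImerge := G.contract_degIn_merge e0 huv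
  obtain ⟨hIu, hOu, hSu⟩ := hG (G.src e0)
  obtain ⟨hIv, hOv, hSv⟩ := hG (G.tgt e0)
  -- equivalence of the degree conditions
  have hdeg2 : ∀ _ : G.src e' ≠ G.tgt e',
      ((G.degOut (G.src e') = 1 ∨ G.degIn (G.tgt e') = 1) ↔
      ((G.contract e0).degOut (Quot.mk (G.mergeRel e0) (G.src e')) = 1 ∨
       (G.contract e0).degIn (Quot.mk (G.mergeRel e0) (G.tgt e')) = 1)) := by
    intro hab
    by_cases hau : G.src e' = G.src e0
    · -- source of e' is u
      have hbu : G.tgt e' ≠ G.src e0 := fun h => hab (hau.trans h.symm)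
      have hbv : G.tgt e' ≠ G.tgt e0 := fun h => hnotuv ⟨hau, h⟩
      have h2 := G.two_le_degOut hau rfl hne
      rw [G.contract_degIn_of_ne e0 _ hbu hbv, hau]
      omega
    · by_cases hav : G.src e' = G.tgt e0
      · -- source of e' is v
        have hbu : G.tgt e' ≠ G.src e0 := fun h => hrev ⟨hav, h⟩
        have hbv : G.tgt e' ≠ G.tgt e0 := fun h => hab (hav.trans h.symm)
        rw [G.contract_degIn_of_ne e0 _ hbu hbv, hav, ← hquv]
        rcases hdeg with h0 | h0 <;> omega
      · rw [G.contract_degOut_of_ne e0 _ hau hav]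
        by_cases hbu : G.tgt e' = G.src e0
        · -- target of e' is u
          rw [hbu, hquv]
          rcases hdeg with h0 | h0 <;> omega
        · by_cases hbv : G.tgt e' = G.tgt e0
          · -- target of e' is v
            have h2 := G.two_le_degIn hbv rfl hne
            rw [hbv]
            rcases hdeg with h0 | h0 <;> omega
          · rw [G.contract_degIn_of_ne e0 _ hbu hbv]
  constructor
  · rintro ⟨hab, hd⟩
    exact ⟨fun h => hab (hiff1.mp h), (hdeg2 hab).mp hd⟩
  · rintro ⟨hab, hd⟩
    have hab' : G.src e' ≠ G.tgt e' := fun h => hab (hiff1.mpr h)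
    exact ⟨hab', (hdeg2 hab').mpr hd⟩
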